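/- Let η_l := 2l/(4^l (2l+1)!) for l ∈ ℕ, and define δ_l recursively by δ_l = η_l − Σ_{b=1}^{l−1} η_{l−b} δ_b/(2l−2b). Then Σ_{l=1}^∞ 4^l |δ_l| ≤ 6/5. -/

import Mathlib

open Finset

lemma factA : ∀ k : ℕ, 3 * 10 ^ k * 2 ^ (k + 1) ≤ Nat.factorial (2 * (k + 1) + 1) := by
  intro k
  induction k with
  | zero => decide
  | succ n ih =>
    have h : 2 * (n + 2) + 1 = (2 * (n + 1) + 1) + 2 := by ring
    rw [h]
    have h2 : Nat.factorial ((2 * (n + 1) + 1) + 2)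
        = (2 * (n + 1) + 1 + 2) * ((2 * (n + 1) + 1 + 1) * Nat.factorial (2 * (n + 1) + 1)) := by
      rw [Nat.factorial_succ, Nat.factorial_succ]
    rw [h2]
    calc 3 * 10 ^ (n + 1) * 2 ^ (n + 2) = 20 * (3 * 10 ^ n * 2 ^ (n + 1)) := by ring
      _ ≤ 20 * Nat.factorial (2 * (n + 1) + 1) := Nat.mul_le_mul_left _ ih
      _ ≤ (2 * (n + 1) + 1 + 2) * ((2 * (n + 1) + 1 + 1) * Nat.factorial (2 * (n + 1) + 1)) := by
          rw [← Nat.mul_assoc]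
          exact Nat.mul_le_mul_right _ (by nlinarith)

lemma factB : ∀ m : ℕ, 15 * (m + 2) * 2 ^ (m + 2) ≤ Nat.factorial (2 * (m + 2) + 1) := by
  intro m
  induction m with
  | zero => decide
  | succ n ih =>
    have h : 2 * (n + 3) + 1 = (2 * (n + 2) + 1) + 2 := by ring
    rw [h]
    have h2 : Nat.factorial ((2 * (n + 2) + 1) + 2)
        = (2 * (n + 2) + 1 + 2) * ((2 * (n + 2) + 1 + 1) * Nat.factorial (2 * (n + 2) + 1)) := by
      rw [Nat.factorial_succ, Nat.factorial_succ]
    rw [h2]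
    calc 15 * (n + 3) * 2 ^ (n + 3) = (2 * (n + 3)) * (15 * 2 ^ (n + 2)) := by ring
      _ ≤ (42 * (n + 2)) * (15 * 2 ^ (n + 2)) := by
          exact Nat.mul_le_mul_right _ (by omega)
      _ = 42 * (15 * (n + 2) * 2 ^ (n + 2)) := by ring
      _ ≤ 42 * Nat.factorial (2 * (n + 2) + 1) := Nat.mul_le_mul_left _ ih
      _ ≤ (2 * (n + 2) + 1 + 2) * ((2 * (n + 2) + 1 + 1) * Nat.factorial (2 * (n + 2) + 1)) := by
          rw [← Nat.mul_assoc]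
          exact Nat.mul_le_mul_right _ (by nlinarith)

lemma key (η δ : ℕ → ℝ)
    (hη : ∀ l : ℕ, η l = (2 * l) / (4 ^ l * Nat.factorial (2 * l + 1)))
    (hδ : ∀ l : ℕ, 1 ≤ l →
      δ l = η l - ∑ b ∈ Finset.Ico 1 l, η (l - b) * δ b / (2 * (l : ℝ) - 2 * b)) :
    ∀ l : ℕ, 1 ≤ l → |δ l| ≤ (1/8 : ℝ) ^ l := by
  intro l
  induction l using Nat.strong_induction_on with
  | _ l ih =>
  intro hl
  rcases eq_or_lt_of_le hl with h1 | h2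
  · -- l = 1
    have hl1 : l = 1 := h1.symm
    subst hl1
    rw [hδ 1 le_rfl]
    simp only [Finset.Ico_self, Finset.sum_empty, sub_zero]
    rw [hη 1]
    norm_num [Nat.factorial]
  · -- l ≥ 2
    rw [hδ l hl]
    have hsum : |∑ b ∈ Finset.Ico 1 l, η (l - b) * δ b / (2 * (l : ℝ) - 2 * b)|
        ≤ ∑ b ∈ Finset.Ico 1 l, (1/8 : ℝ) ^ l * (1/3) * (1/10) ^ (l - 1 - b) := by
      refine (Finset.abs_sum_le_sum_abs _ _).trans (Finset.sum_le_sum ?_)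
      intro b hb
      rw [Finset.mem_Ico] at hb
      obtain ⟨hb1, hbl⟩ := hb
      obtain ⟨k, hk⟩ : ∃ k, l - b = k := ⟨_, rfl⟩
      rw [hk]
      have hk1 : 1 ≤ k := by omega
      have hlbk : l = b + k := by omega
      have hden : 2 * (l : ℝ) - 2 * b = 2 * k := by
        have : (l : ℝ) = b + k := by exact_mod_cast congrArg (Nat.cast : ℕ → ℝ) hlbk
        rw [this]; ring
      rw [hden, hη k, abs_div, abs_mul]
      have hkpos : (0:ℝ) < k := by exact_mod_cast hk1
      have hfac : (0:ℝ) < (Nat.factorial (2 * k + 1) : ℝ) := by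
        exact_mod_cast Nat.factorial_pos _
      have h4k : (0:ℝ) < 4 ^ k := by positivity
      have heta_abs : |(2 * (k:ℝ)) / (4 ^ k * Nat.factorial (2 * k + 1))|
          = (2 * (k:ℝ)) / (4 ^ k * Nat.factorial (2 * k + 1)) := by
        rw [abs_of_nonneg]; positivity
      rw [heta_abs, abs_of_nonneg (by positivity : (0:ℝ) ≤ 2 * (k:ℝ))]
      have hdb : |δ b| ≤ (1/8 : ℝ) ^ b := ih b hbl hb1
      -- term = (2k/(4^k * (2k+1)!)) * |δ b| / (2k) ≤ (1/8)^b / (4^k * (2k+1)!)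
      have step1 : (2 * (k:ℝ)) / (4 ^ k * Nat.factorial (2 * k + 1)) * |δ b| / (2 * k)
          ≤ (1/8 : ℝ) ^ b / (4 ^ k * Nat.factorial (2 * k + 1)) := by
        rw [div_mul_eq_mul_div, div_div]
        rw [div_le_div_iff₀ (by positivity) (by positivity)]
        have : (0:ℝ) ≤ 4 ^ k * (Nat.factorial (2 * k + 1) : ℝ) := by positivity
        nlinarith [abs_nonneg (δ b), mul_le_mul_of_nonneg_left hdb (le_of_lt hkpos)]
      refine step1.trans ?_
      -- use factA with k-1 : 3*10^(k-1)*2^k ≤ (2k+1)!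
      obtain ⟨k', rfl⟩ : ∃ k', k = k' + 1 := ⟨k - 1, by omega⟩
      have hA : (3 * 10 ^ k' * 2 ^ (k' + 1) : ℝ) ≤ (Nat.factorial (2 * (k' + 1) + 1) : ℝ) := by
        exact_mod_cast factA k'
      have hk1b : l - 1 - b = k' := by omega
      rw [hk1b]
      have hbk : (1/8 : ℝ) ^ l = (1/8) ^ b * (1/8) ^ (k' + 1) := by
        rw [← pow_add, ← hlbk]
      rw [hbk]
      rw [div_le_iff₀ (by positivity)]
      have h8b : (0:ℝ) < (1/8:ℝ) ^ b := by positivity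
      have expand : (1/8:ℝ) ^ b * (1/8) ^ (k' + 1) * (1/3) * (1/10) ^ k'
          * (4 ^ (k' + 1) * (Nat.factorial (2 * (k' + 1) + 1) : ℝ))
          = (1/8:ℝ) ^ b * ((Nat.factorial (2 * (k' + 1) + 1) : ℝ)
              / (3 * 10 ^ k' * 2 ^ (k' + 1))) := by
        have h84 : (8:ℝ)^(k'+1) = 2^(k'+1) * 4^(k'+1) := by rw [← mul_pow]; norm_num
        field_simp
        have e1 : (1/8:ℝ)^(k'+1) * 4^(k'+1) * 2^(k'+1) = 1 := by rw [← mul_pow, ← mul_pow]; norm_num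
        have e2 : (1/10:ℝ)^k' * 10^k' = 1 := by rw [← mul_pow]; norm_num
        linear_combination ((1/10:ℝ)^k' * 10^k') * e1 + e2
      rw [expand]
      have hdiv : (1:ℝ) ≤ (Nat.factorial (2 * (k' + 1) + 1) : ℝ) / (3 * 10 ^ k' * 2 ^ (k' + 1)) := by
        rw [le_div_iff₀ (by positivity)]
        linarith
      nlinarith
    have hgeom : ∑ b ∈ Finset.Ico 1 l, (1/8 : ℝ) ^ l * (1/3) * (1/10 : ℝ) ^ (l - 1 - b)
        ≤ (1/8 : ℝ) ^ l * (10/27) := by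
      rw [Finset.sum_Ico_eq_sum_range]
      have hre : ∀ i ∈ Finset.range (l - 1),
          (1/8 : ℝ) ^ l * (1/3) * (1/10 : ℝ) ^ (l - 1 - (1 + i))
          = (1/8 : ℝ) ^ l * (1/3) * (1/10 : ℝ) ^ ((l-1) - 1 - i) := by
        intro i hi
        congr 2
        omega
      rw [Finset.sum_congr rfl hre]
      rw [← Finset.mul_sum, Finset.sum_range_reflect (fun j => (1/10:ℝ)^j) (l-1)]
      have hg : ∑ j ∈ Finset.range (l - 1), (1/10 : ℝ) ^ j ≤ 10/9 := by
        rw [geom_sum_eq (by norm_num : (1/10:ℝ) ≠ 1)]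
        have : (0:ℝ) ≤ (1/10:ℝ) ^ (l-1) := by positivity
        rw [div_le_iff_of_neg (by norm_num : (1/10:ℝ) - 1 < 0)]
        linarith
      have h8l : (0:ℝ) ≤ (1/8:ℝ) ^ l * (1/3) := by positivity
      calc (1/8 : ℝ) ^ l * (1/3) * ∑ j ∈ Finset.range (l-1), (1/10:ℝ)^j
          ≤ (1/8 : ℝ) ^ l * (1/3) * (10/9) := by nlinarith
        _ = (1/8 : ℝ) ^ l * (10/27) := by ring
    -- bound η l for l ≥ 2
    have heta : η l ≤ (2/15 : ℝ) * (1/8) ^ l := by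
      rw [hη l]
      obtain ⟨m, rfl⟩ : ∃ m, l = m + 2 := ⟨l - 2, by omega⟩
      have hB : (15 * ((m:ℝ) + 2) * 2 ^ (m + 2) : ℝ) ≤ (Nat.factorial (2 * (m + 2) + 1) : ℝ) := by
        exact_mod_cast factB m
      have hfac : (0:ℝ) < (Nat.factorial (2 * (m+2) + 1) : ℝ) := by
        exact_mod_cast Nat.factorial_pos _
      rw [div_le_iff₀ (by positivity)]
      have key2 : (2/15 : ℝ) * (1/8) ^ (m+2) * (4 ^ (m+2) * (15 * ((m:ℝ)+2) * 2 ^ (m+2)))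
          = 2 * ((m:ℝ) + 2) := by
        have : ((1:ℝ)/8) ^ (m+2) * (4:ℝ)^(m+2) * (2:ℝ)^(m+2) = 1 := by
          rw [← mul_pow, ← mul_pow]
          norm_num
        nlinarith [this]
      have hcast : (2 : ℝ) * ((m + 2 : ℕ) : ℝ) = 2 * ((m:ℝ) + 2) := by push_cast; ring
      rw [hcast, ← key2]
      have h4 : (0:ℝ) < (2/15 : ℝ) * (1/8) ^ (m+2) * 4 ^ (m+2) := by positivity
      have := mul_le_mul_of_nonneg_left hB (le_of_lt h4)
      nlinarith [this]
    calc |η l - ∑ b ∈ Finset.Ico 1 l, η (l - b) * δ b / (2 * (l : ℝ) - 2 * b)|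
        ≤ |η l| + |∑ b ∈ Finset.Ico 1 l, η (l - b) * δ b / (2 * (l : ℝ) - 2 * b)| :=
          abs_sub _ _
      _ ≤ (2/15 : ℝ) * (1/8) ^ l + (1/8 : ℝ) ^ l * (10/27) := by
          have hetapos : 0 ≤ η l := by
            rw [hη l]; positivity
          rw [abs_of_nonneg hetapos]
          exact add_le_add heta (hsum.trans hgeom)
      _ ≤ (1/8 : ℝ) ^ l := by nlinarith [pow_pos (by norm_num : (0:ℝ) < 1/8) l]

theorem stmt_0 (η δ : ℕ → ℝ)
    (hη : ∀ l : ℕ, η l = (2 * l) / (4 ^ l * Nat.factorial (2 * l + 1)))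
    (hδ : ∀ l : ℕ, 1 ≤ l →
      δ l = η l - ∑ b ∈ Finset.Ico 1 l, η (l - b) * δ b / (2 * (l : ℝ) - 2 * b)) :
    Summable (fun l : ℕ => (4 : ℝ) ^ (l + 1) * |δ (l + 1)|) ∧
      ∑' l : ℕ, (4 : ℝ) ^ (l + 1) * |δ (l + 1)| ≤ 6 / 5 := by
  have hkey := key η δ hη hδ
  have hb : ∀ n : ℕ, (4 : ℝ) ^ (n + 1) * |δ (n + 1)| ≤ (1/2 : ℝ) * (1/2) ^ n := by
    intro n
    have h1 : |δ (n + 1)| ≤ (1/8 : ℝ) ^ (n + 1) := hkey (n + 1) (Nat.le_add_left 1 n)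
    have h2 : (4 : ℝ) ^ (n + 1) * (1/8 : ℝ) ^ (n + 1) = (1/2 : ℝ) * (1/2) ^ n := by
      rw [← mul_pow]
      norm_num
      rw [pow_succ]
      ring
    calc (4 : ℝ) ^ (n + 1) * |δ (n + 1)| ≤ (4 : ℝ) ^ (n + 1) * (1/8 : ℝ) ^ (n + 1) := by
          exact mul_le_mul_of_nonneg_left h1 (by positivity)
      _ = (1/2 : ℝ) * (1/2) ^ n := h2
  have hsg : Summable (fun n : ℕ => (1/2 : ℝ) * (1/2 : ℝ) ^ n) :=
    (summable_geometric_of_lt_one (by norm_num) (by norm_num)).mul_left _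
  have hnn : ∀ n : ℕ, (0:ℝ) ≤ (4 : ℝ) ^ (n + 1) * |δ (n + 1)| := by
    intro n; positivity
  have hs : Summable (fun l : ℕ => (4 : ℝ) ^ (l + 1) * |δ (l + 1)|) :=
    Summable.of_nonneg_of_le hnn hb hsg
  refine ⟨hs, ?_⟩
  have ht : ∑' n : ℕ, (1/2 : ℝ) * (1/2 : ℝ) ^ n = 1 := by
    rw [tsum_mul_left, tsum_geometric_of_lt_one (by norm_num) (by norm_num)]
    norm_num
  calc ∑' l : ℕ, (4 : ℝ) ^ (l + 1) * |δ (l + 1)| ≤ ∑' n : ℕ, (1/2 : ℝ) * (1/2 : ℝ) ^ n :=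
        Summable.tsum_le_tsum hb hs hsg
    _ = 1 := ht
    _ ≤ 6 / 5 := by norm_num
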